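/- (Theorem 2.2, MSE value.) Under the hypotheses of Theorem 2.2—K symmetric with nonnegative quadratic form, G = (G₁,…,G_m) and matrix D satisfying ∫_T f_i dG_j = δ_{ij} and ∫_T K(t,s) G(dt) = D f(s) for all s ∈ T, and ζ_ν satisfying ∫_T K(t,s) ζ_ν(dt) = ∫_S K(s,u) ν(du) for all s ∈ T—let c = ∫_S f dν − ∫_T f dζ_ν, Q* = ζ_ν + Σ_j c_j G_j, and assume additionally that D = ∬_{T×T} K(t,s) G(dt) Gᵀ(ds) (entrywise D_{ij} = ∬ K(t,s) G_i(dt) G_j(ds)). Then M(Q*) = ∬_{S×S} K(s,u) ν(ds)ν(du) + cᵀ D ∫_S f(s) ν(ds) − ∬ K(t,u) ν(du) Q*(dt), where M is the MSE functional M(Q) = ∬_{S×S} K dν dν − 2 ∬_{S×T} K(t,s) ν(dt)Q(ds) + ∬_{T×T} K dQ dQ. -/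

import Mathlib

open MeasureTheory

/-- Integral of a real function against a finite signed measure, via the Jordan
decomposition. -/
noncomputable def sInt {α : Type*} [MeasurableSpace α] (μ : SignedMeasure α) (g : α → ℝ) : ℝ :=
  (∫ x, g x ∂μ.toJordanDecomposition.posPart) - ∫ x, g x ∂μ.toJordanDecomposition.negPart

namespace BlupAux
variable {α β : Type*} [MeasurableSpace α] [MeasurableSpace β]

lemma integrable_of_bdd {g : α → ℝ} (hg : Measurable g) {C : ℝ} (hC : ∀ x, |g x| ≤ C)
    (μ : Measure α) [IsFiniteMeasure μ] : Integrable g μ :=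
  (integrable_const C).mono' hg.aestronglyMeasurable
    (Filter.Eventually.of_forall fun x => by simpa using hC x)

lemma sm_apply (μ : SignedMeasure α) {A : Set α} (hA : MeasurableSet A) :
    μ A = (μ.toJordanDecomposition.posPart A).toReal
        - (μ.toJordanDecomposition.negPart A).toReal := by
  conv_lhs => rw [← μ.toSignedMeasure_toJordanDecomposition]
  rw [JordanDecomposition.toSignedMeasure, VectorMeasure.sub_apply,
    Measure.toSignedMeasure_apply_measurable hA, Measure.toSignedMeasure_apply_measurable hA]
  rfl

lemma jordan_add (μ ρ : SignedMeasure α) :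
    (μ + ρ).toJordanDecomposition.posPart
        + (μ.toJordanDecomposition.negPart + ρ.toJordanDecomposition.negPart)
      = (μ + ρ).toJordanDecomposition.negPart
        + (μ.toJordanDecomposition.posPart + ρ.toJordanDecomposition.posPart) := by
  ext A hA
  have h1 := sm_apply (μ + ρ) hA
  have h2 := sm_apply μ hA
  have h3 := sm_apply ρ hA
  have h4 : (μ + ρ) A = μ A + ρ A := by simp
  simp only [Measure.add_apply]
  have e : ∀ (ξ : SignedMeasure α), ξ.toJordanDecomposition.posPart A ≠ ⊤ ∧
      ξ.toJordanDecomposition.negPart A ≠ ⊤ := fun ξ => ⟨measure_ne_top _ _, measure_ne_top _ _⟩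
  rw [← ENNReal.toReal_eq_toReal_iff' (by simp [(e _).1, (e _).2]) (by simp [(e _).1, (e _).2])]
  rw [ENNReal.toReal_add, ENNReal.toReal_add, ENNReal.toReal_add, ENNReal.toReal_add] <;>
    first
      | linarith
      | simp [(e _).1, (e _).2, ENNReal.add_ne_top]

lemma sInt_add (μ ρ : SignedMeasure α) {g : α → ℝ} (hg : Measurable g) {C : ℝ}
    (hC : ∀ x, |g x| ≤ C) : sInt (μ + ρ) g = sInt μ g + sInt ρ g := by
  have hint : ∀ (m : Measure α) [IsFiniteMeasure m], Integrable g m :=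
    fun m _ => integrable_of_bdd hg hC m
  have := congrArg (fun m : Measure α => ∫ x, g x ∂m) (jordan_add μ ρ)
  simp only [integral_add_measure (hint _) (hint _)] at this
  unfold sInt; linarith

lemma sInt_zero (g : α → ℝ) : sInt (0 : SignedMeasure α) g = 0 := by
  unfold sInt
  rw [SignedMeasure.toJordanDecomposition_zero]
  simp

lemma sInt_smul (μ : SignedMeasure α) (r : ℝ) (g : α → ℝ) :
    sInt (r • μ) g = r * sInt μ g := by
  unfold sInt
  rw [SignedMeasure.toJordanDecomposition_smul_real]
  rcases le_or_gt 0 r with hr | hr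
  · rw [JordanDecomposition.real_smul_posPart_nonneg _ _ hr,
      JordanDecomposition.real_smul_negPart_nonneg _ _ hr,
      integral_smul_nnreal_measure, integral_smul_nnreal_measure]
    simp only [NNReal.smul_def, Real.coe_toNNReal _ hr, smul_eq_mul]
    ring
  · rw [JordanDecomposition.real_smul_posPart_neg _ _ hr,
      JordanDecomposition.real_smul_negPart_neg _ _ hr,
      integral_smul_nnreal_measure, integral_smul_nnreal_measure]
    simp only [NNReal.smul_def, Real.coe_toNNReal _ (by linarith : (0:ℝ) ≤ -r), smul_eq_mul]
    ring

lemma sInt_msum {ι : Type*} (s : Finset ι) (μ : ι → SignedMeasure α) {g : α → ℝ}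
    (hg : Measurable g) {C : ℝ} (hC : ∀ x, |g x| ≤ C) :
    sInt (∑ i ∈ s, μ i) g = ∑ i ∈ s, sInt (μ i) g := by
  classical
  induction s using Finset.induction_on with
  | empty => simpa using sInt_zero g
  | insert _ _ hni ih =>
    rw [Finset.sum_insert hni, Finset.sum_insert hni, sInt_add _ _ hg hC, ih]

lemma sInt_fun_add (μ : SignedMeasure α) {g h : α → ℝ}
    (hg : Measurable g) {C : ℝ} (hCg : ∀ x, |g x| ≤ C)
    (hh : Measurable h) {C' : ℝ} (hCh : ∀ x, |h x| ≤ C') :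
    sInt μ (fun x => g x + h x) = sInt μ g + sInt μ h := by
  unfold sInt
  rw [integral_add (integrable_of_bdd hg hCg _) (integrable_of_bdd hh hCh _),
    integral_add (integrable_of_bdd hg hCg _) (integrable_of_bdd hh hCh _)]
  ring

lemma sInt_fun_const_mul (μ : SignedMeasure α) (g : α → ℝ) (a : ℝ) :
    sInt μ (fun x => a * g x) = a * sInt μ g := by
  unfold sInt; rw [integral_const_mul, integral_const_mul]; ring

lemma sInt_fun_sum {ι : Type*} (s : Finset ι) (μ : SignedMeasure α) (h : ι → α → ℝ)
    (hmeas : ∀ i, Measurable (h i)) (hbd : ∀ i, ∃ C, ∀ x, |h i x| ≤ C) :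
    sInt μ (fun x => ∑ i ∈ s, h i x) = ∑ i ∈ s, sInt μ (h i) := by
  unfold sInt
  rw [integral_finset_sum s (fun i _ => integrable_of_bdd (hmeas i) (hbd i).choose_spec _),
    integral_finset_sum s (fun i _ => integrable_of_bdd (hmeas i) (hbd i).choose_spec _),
    Finset.sum_sub_distrib]

lemma sInt_abs_le (μ : SignedMeasure α) {g : α → ℝ} {C : ℝ} (hC : ∀ x, |g x| ≤ C) :
    |sInt μ g| ≤ C * (μ.toJordanDecomposition.posPart Set.univ).toReal
      + C * (μ.toJordanDecomposition.negPart Set.univ).toReal := by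
  have h1 := norm_integral_le_of_norm_le_const (μ := μ.toJordanDecomposition.posPart)
    (Filter.Eventually.of_forall fun x => by simpa using hC x) (f := g)
  have h2 := norm_integral_le_of_norm_le_const (μ := μ.toJordanDecomposition.negPart)
    (Filter.Eventually.of_forall fun x => by simpa using hC x) (f := g)
  unfold sInt
  have := abs_sub (∫ x, g x ∂μ.toJordanDecomposition.posPart)
    (∫ x, g x ∂μ.toJordanDecomposition.negPart)
  simp only [Real.norm_eq_abs, measureReal_def] at h1 h2
  linarith

lemma sInt_swap (μ : SignedMeasure α) (ρ : SignedMeasure β) (k : α → β → ℝ)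
    (hk : Measurable fun p : α × β => k p.1 p.2) {C : ℝ} (hC : ∀ x y, |k x y| ≤ C) :
    sInt μ (fun x => sInt ρ fun y => k x y) = sInt ρ (fun y => sInt μ fun x => k x y) := by
  have hswap : ∀ (P : Measure α) (Q : Measure β) [IsFiniteMeasure P] [IsFiniteMeasure Q],
      ∫ x, ∫ y, k x y ∂Q ∂P = ∫ y, ∫ x, k x y ∂P ∂Q := by
    intro P Q _ _
    exact integral_integral_swap (integrable_of_bdd hk (fun p => hC p.1 p.2) (P.prod Q))
  have hmr : ∀ (Q : Measure β) [IsFiniteMeasure Q], Measurable fun x => ∫ y, k x y ∂Q :=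
    fun Q _ => (StronglyMeasurable.integral_prod_right' (ν := Q)
      (f := fun p : α × β => k p.1 p.2) hk.stronglyMeasurable).measurable
  have hml : ∀ (P : Measure α) [IsFiniteMeasure P], Measurable fun y => ∫ x, k x y ∂P :=
    fun P _ => (StronglyMeasurable.integral_prod_left' (μ := P)
      (f := fun p : α × β => k p.1 p.2) hk.stronglyMeasurable).measurable
  have hbr : ∀ (Q : Measure β) [IsFiniteMeasure Q], ∀ x,
      |∫ y, k x y ∂Q| ≤ C * (Q Set.univ).toReal := fun Q _ x => by
    simpa [measureReal_def] using norm_integral_le_of_norm_le_const (μ := Q)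
      (Filter.Eventually.of_forall fun y => by simpa using hC x y) (f := fun y => k x y)
  have hbl : ∀ (P : Measure α) [IsFiniteMeasure P], ∀ y,
      |∫ x, k x y ∂P| ≤ C * (P Set.univ).toReal := fun P _ y => by
    simpa [measureReal_def] using norm_integral_le_of_norm_le_const (μ := P)
      (Filter.Eventually.of_forall fun x => by simpa using hC x y) (f := fun x => k x y)
  set Pμ := μ.toJordanDecomposition.posPart
  set Nμ := μ.toJordanDecomposition.negPart
  set Pρ := ρ.toJordanDecomposition.posPart
  set Nρ := ρ.toJordanDecomposition.negPart
  have lhs : sInt μ (fun x => sInt ρ fun y => k x y)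
      = (∫ x, ∫ y, k x y ∂Pρ ∂Pμ - ∫ x, ∫ y, k x y ∂Nρ ∂Pμ)
        - (∫ x, ∫ y, k x y ∂Pρ ∂Nμ - ∫ x, ∫ y, k x y ∂Nρ ∂Nμ) := by
    unfold sInt
    rw [integral_sub (integrable_of_bdd (hmr Pρ) (hbr Pρ) Pμ) (integrable_of_bdd (hmr Nρ) (hbr Nρ) Pμ),
      integral_sub (integrable_of_bdd (hmr Pρ) (hbr Pρ) Nμ) (integrable_of_bdd (hmr Nρ) (hbr Nρ) Nμ)]
  have rhs : sInt ρ (fun y => sInt μ fun x => k x y)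
      = (∫ y, ∫ x, k x y ∂Pμ ∂Pρ - ∫ y, ∫ x, k x y ∂Nμ ∂Pρ)
        - (∫ y, ∫ x, k x y ∂Pμ ∂Nρ - ∫ y, ∫ x, k x y ∂Nμ ∂Nρ) := by
    unfold sInt
    rw [integral_sub (integrable_of_bdd (hml Pμ) (hbl Pμ) Pρ) (integrable_of_bdd (hml Nμ) (hbl Nμ) Pρ),
      integral_sub (integrable_of_bdd (hml Pμ) (hbl Pμ) Nρ) (integrable_of_bdd (hml Nμ) (hbl Nμ) Nρ)]
  rw [lhs, rhs, hswap Pμ Pρ, hswap Pμ Nρ, hswap Nμ Pρ, hswap Nμ Nρ]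
  ring

end BlupAux

open BlupAux

/-- Theorem 2.2, MSE value.  Under the hypotheses of Theorem 2.2, with
`D` the covariance matrix of the BLUE (`D_{ij} = ∬ K dG_i dG_j`), the minimal mean squared
error equals
`M(Q*) = ∬_{S×S} K dν dν + cᵀ D ∫_S f dν − ∬ K(t,u) ν(du) Q*(dt)`. -/
theorem blup_average_mse_value {d m : ℕ}
    (T S : Set (Fin d → ℝ)) (hT : MeasurableSet T) (hS : MeasurableSet S)
    (K : (Fin d → ℝ) → (Fin d → ℝ) → ℝ)
    (hKmeas : Measurable (Function.uncurry K))
    (hKbd : ∃ C, ∀ t s, |K t s| ≤ C)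
    (hKsym : ∀ t s, K t s = K s t)
    (hKpos : ∀ R : SignedMeasure T, 0 ≤ sInt R fun t => sInt R fun s => K t.1 s.1)
    (f : (Fin d → ℝ) → Fin m → ℝ)
    (hfmeas : ∀ i, Measurable fun t => f t i)
    (hfbd : ∃ C, ∀ t i, |f t i| ≤ C)
    (ν : SignedMeasure S)
    (G : Fin m → SignedMeasure T) (D : Fin m → Fin m → ℝ)
    (hG1 : ∀ i j, sInt (G j) (fun t => f t.1 i) = if i = j then 1 else 0)
    (hG2 : ∀ (s : T) (k : Fin m),
      sInt (G k) (fun t => K t.1 s.1) = ∑ j, D k j * f s.1 j)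
    -- `D` is the covariance matrix of the BLUE:
    (hD : ∀ i j, D i j = sInt (G i) fun t => sInt (G j) fun s => K t.1 s.1)
    (ζν : SignedMeasure T)
    (hζν : ∀ s : T, sInt ζν (fun t => K t.1 s.1) = sInt ν fun u => K s.1 u.1)
    (c : Fin m → ℝ)
    (hc : ∀ i, c i = (sInt ν fun s => f s.1 i) - sInt ζν fun t => f t.1 i)
    (Qstar : SignedMeasure T)
    (hQstar : Qstar = ζν + ∑ j, c j • G j)
    (M : SignedMeasure T → ℝ)
    (hM : ∀ Q : SignedMeasure T,
      M Q = (sInt ν fun t => sInt ν fun s => K t.1 s.1)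
        - 2 * (sInt ν fun t => sInt Q fun s => K t.1 s.1)
        + (sInt Q fun t => sInt Q fun s => K t.1 s.1)) :
    M Qstar = (sInt ν fun s => sInt ν fun u => K s.1 u.1)
      + (∑ i, c i * ∑ j, D i j * sInt ν fun s => f s.1 j)
      - sInt Qstar (fun t => sInt ν fun u => K t.1 u.1) := by
  classical
  obtain ⟨CK, hCK⟩ := hKbd
  obtain ⟨Cf, hCf⟩ := hfbd
  have hsubT : Measurable (fun t : T => (t : Fin d → ℝ)) := measurable_subtype_coe
  have hsubS : Measurable (fun s : S => (s : Fin d → ℝ)) := measurable_subtype_coe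
  -- measurable kernels
  have hkTS : Measurable fun p : T × S => K p.1.1 p.2.1 :=
    hKmeas.comp ((hsubT.comp measurable_fst).prodMk (hsubS.comp measurable_snd))
  have hkST : Measurable fun p : S × T => K p.1.1 p.2.1 :=
    hKmeas.comp ((hsubS.comp measurable_fst).prodMk (hsubT.comp measurable_snd))
  -- sections of K are measurable
  have hsecT : ∀ a, Measurable fun t : T => K a t.1 :=
    fun a => (hKmeas.comp (measurable_const.prodMk measurable_id)).comp hsubT
  have hsecS : ∀ a, Measurable fun u : S => K a u.1 :=
    fun a => (hKmeas.comp (measurable_const.prodMk measurable_id)).comp hsubS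
  have hsecT' : ∀ a, Measurable fun t : T => K t.1 a :=
    fun a => (hKmeas.comp (measurable_id.prodMk measurable_const)).comp hsubT
  -- f sections measurable and bounded on T
  have hfT : ∀ j, Measurable fun t : T => f t.1 j := fun j => (hfmeas j).comp hsubT
  have hfS : ∀ j, Measurable fun s : S => f s.1 j := fun j => (hfmeas j).comp hsubS
  -- expansion of sInt Qstar
  have sQ : ∀ (g : T → ℝ), Measurable g → ∀ (C : ℝ), (∀ x, |g x| ≤ C) →
      sInt Qstar g = sInt ζν g + ∑ j, c j * sInt (G j) g := by
    intro g hg C hC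
    rw [hQstar, sInt_add _ _ hg hC, sInt_msum _ _ hg hC]
    congr 1
    exact Finset.sum_congr rfl fun j _ => sInt_smul (G j) (c j) g
  -- sInt Qstar of f-coordinates
  have hQf : ∀ j, sInt Qstar (fun t => f t.1 j) = sInt ν fun s => f s.1 j := by
    intro j
    rw [sQ _ (hfT j) Cf (fun t => hCf t.1 j)]
    have : ∀ i, sInt (G i) (fun t => f t.1 j) = if j = i then 1 else 0 := fun i => hG1 j i
    simp only [this, mul_ite, mul_one, mul_zero, Finset.sum_ite_eq, Finset.mem_univ, if_true]
    rw [hc j]; ring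
  -- sInt Qstar of K-sections
  have hQK : ∀ s : T, sInt Qstar (fun t => K t.1 s.1)
      = (sInt ν fun u => K s.1 u.1) + ∑ k, c k * ∑ j, D k j * f s.1 j := by
    intro s
    rw [sQ _ (hsecT' s.1) CK (fun t => hCK t.1 s.1), hζν s]
    congr 1
    exact Finset.sum_congr rfl fun k _ => by rw [hG2 s k]
  -- the function t ↦ ∫ K(t,·) dν : measurable and bounded
  have hLmeas : Measurable fun t : T => sInt ν fun u => K t.1 u.1 := by
    unfold sInt
    exact ((StronglyMeasurable.integral_prod_right'
        (f := fun p : T × S => K p.1.1 p.2.1) hkTS.stronglyMeasurable).measurable).sub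
      ((StronglyMeasurable.integral_prod_right'
        (f := fun p : T × S => K p.1.1 p.2.1) hkTS.stronglyMeasurable).measurable)
  set Cν : ℝ := CK * (ν.toJordanDecomposition.posPart Set.univ).toReal
      + CK * (ν.toJordanDecomposition.negPart Set.univ).toReal with hCν
  have hLbd : ∀ t : T, |sInt ν fun u => K t.1 u.1| ≤ Cν :=
    fun t => sInt_abs_le ν (fun u => hCK t.1 u.1)
  -- bound for the correction term
  have hcorrbd : ∀ t : T, |∑ k, c k * ∑ j, D k j * f t.1 j|
      ≤ ∑ k, |c k| * ∑ j, |D k j| * Cf := by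
    intro t
    calc |∑ k, c k * ∑ j, D k j * f t.1 j| ≤ ∑ k, |c k * ∑ j, D k j * f t.1 j| :=
          Finset.abs_sum_le_sum_abs _ _
      _ ≤ ∑ k, |c k| * ∑ j, |D k j| * Cf := by
          apply Finset.sum_le_sum; intro k _
          rw [abs_mul]
          gcongr
          calc |∑ j, D k j * f t.1 j| ≤ ∑ j, |D k j * f t.1 j| :=
                Finset.abs_sum_le_sum_abs _ _
            _ ≤ ∑ j, |D k j| * Cf := Finset.sum_le_sum fun j _ => by
                rw [abs_mul]; gcongr; exact hCf t.1 j
  have hcorrmeas : Measurable fun t : T => ∑ k, c k * ∑ j, D k j * f t.1 j := by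
    apply Finset.measurable_sum
    intro k _
    exact (Finset.measurable_sum _ fun j _ => (measurable_const.mul (hfT j))).const_mul _
  -- step C : the quadratic term
  have hC1 : (fun t : T => sInt Qstar fun s => K t.1 s.1)
      = fun t : T => (sInt ν fun u => K t.1 u.1) + ∑ k, c k * ∑ j, D k j * f t.1 j := by
    funext t
    have : (fun s : T => K t.1 s.1) = fun s : T => K s.1 t.1 := funext fun s => hKsym _ _
    rw [this, hQK t]
  have hCval : (sInt Qstar fun t => sInt Qstar fun s => K t.1 s.1)
      = (sInt Qstar fun t => sInt ν fun u => K t.1 u.1)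
        + ∑ k, c k * ∑ j, D k j * (sInt ν fun s => f s.1 j) := by
    rw [show (fun t : T => sInt Qstar fun s => K t.1 s.1)
        = fun t : T => (sInt ν fun u => K t.1 u.1) + ∑ k, c k * ∑ j, D k j * f t.1 j from hC1]
    rw [sInt_fun_add Qstar hLmeas hLbd hcorrmeas hcorrbd]
    congr 1
    rw [sInt_fun_sum Finset.univ Qstar (fun k t => c k * ∑ j, D k j * f t.1 j)
      (fun k => (Finset.measurable_sum _ fun j _ => (measurable_const.mul (hfT j))).const_mul _)
      (fun k => ⟨|c k| * ∑ j, |D k j| * Cf, fun t => by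
        rw [abs_mul]
        gcongr
        calc |∑ j, D k j * f t.1 j| ≤ ∑ j, |D k j * f t.1 j| := Finset.abs_sum_le_sum_abs _ _
          _ ≤ ∑ j, |D k j| * Cf := Finset.sum_le_sum fun j _ => by
              rw [abs_mul]; gcongr; exact hCf t.1 j⟩)]
    apply Finset.sum_congr rfl
    intro k _
    rw [sInt_fun_const_mul]
    congr 1
    rw [sInt_fun_sum Finset.univ Qstar (fun j t => D k j * f t.1 j)
      (fun j => measurable_const.mul (hfT j))
      (fun j => ⟨|D k j| * Cf, fun t => by rw [abs_mul]; gcongr; exact hCf t.1 j⟩)]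
    apply Finset.sum_congr rfl
    intro j _
    rw [sInt_fun_const_mul, hQf j]
  -- step B : the cross term, by Fubini and symmetry
  have hBval : (sInt ν fun t => sInt Qstar fun s => K t.1 s.1)
      = sInt Qstar fun t => sInt ν fun u => K t.1 u.1 := by
    rw [sInt_swap ν Qstar (fun x y => K x.1 y.1) hkST (fun x y => hCK x.1 y.1)]
    congr 1
    funext t
    congr 1
    funext u
    exact hKsym u.1 t.1
  rw [hM Qstar, hBval, hCval]
  ring
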